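/- Let n, k be integers with 2 ≤ k ≤ n. Then the regular zeros of the X₁-Laguerre polynomials converge, after scaling, to the zeros of the Hermite polynomial: lim_{α→∞} (x̂_{n,k}^{(α)} − α)/√(2α) = h_{n−1,k−1}, where h_{n−1,1} < … < h_{n−1,n−1} are the zeros of the physicist's Hermite polynomial H_{n−1} in increasing order. -/

import Mathlib

open Finset Filter

/-- The Jacobi polynomial `P_n^{(α,β)}(x)` via its explicit sum representation. -/
noncomputable def jacobiP (α β : ℝ) (n : ℕ) (x : ℝ) : ℝ :=
  ∑ s ∈ Finset.range (n + 1),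
    ((∏ j ∈ Finset.Icc (s + 1) n, (α + (j : ℝ))) / (Nat.factorial (n - s) : ℝ)) *
      ((∏ j ∈ Finset.Icc (n - s + 1) n, (β + (j : ℝ))) / (Nat.factorial s : ℝ)) *
      ((x - 1) / 2) ^ s * ((x + 1) / 2) ^ (n - s)

/-- The X₁-Jacobi polynomial `P̂_n^{(α,β)}(x)` for `n ≥ 1`, with `b = (β+α)/(β-α)`. -/
noncomputable def X1jacobiP (α β : ℝ) (n : ℕ) (x : ℝ) : ℝ :=
  -(1 / 2) * (x - (β + α) / (β - α)) * jacobiP α β (n - 1) x +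
    ((β + α) / (β - α) * jacobiP α β (n - 1) x -
        (if 2 ≤ n then jacobiP α β (n - 2) x else 0)) / (2 * (n : ℝ) - 2 + α + β)

/-- The generalized Laguerre polynomial `L_n^{(α)}(x)` via its explicit sum representation. -/
noncomputable def laguerreL (α : ℝ) (n : ℕ) (x : ℝ) : ℝ :=
  ∑ k ∈ Finset.range (n + 1),
    (-1 : ℝ) ^ k / (Nat.factorial k : ℝ) *
      ((∏ j ∈ Finset.Icc (k + 1) n, (α + (j : ℝ))) / (Nat.factorial (n - k) : ℝ)) * x ^ k

/-- The X₁-Laguerre polynomial `L̂_n^{(α)}(x)` for `n ≥ 1`. -/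
noncomputable def X1laguerreL (α : ℝ) (n : ℕ) (x : ℝ) : ℝ :=
  -(x + α + 1) * laguerreL α (n - 1) x + (if 2 ≤ n then laguerreL α (n - 2) x else 0)

/-- The physicist's Hermite polynomial `H_m(x)`. -/
noncomputable def hermiteH (m : ℕ) (x : ℝ) : ℝ :=
  (Nat.factorial m : ℝ) *
    ∑ j ∈ Finset.range (m / 2 + 1),
      (-1 : ℝ) ^ j / ((Nat.factorial j : ℝ) * (Nat.factorial (m - 2 * j) : ℝ)) *
        (2 * x) ^ (m - 2 * j)

/-- `z 1 < z 2 < … < z n` enumerates, in increasing order, all real zeros of `f`. -/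
def EnumZeros (f : ℝ → ℝ) (n : ℕ) (z : ℕ → ℝ) : Prop :=
  StrictMonoOn z (Set.Icc 1 n) ∧ ∀ x : ℝ, f x = 0 ↔ ∃ k, 1 ≤ k ∧ k ≤ n ∧ x = z k

/-- For `2 ≤ k ≤ n`, the regular zeros of the X₁-Laguerre polynomials
converge, after scaling, to the zeros of the Hermite polynomial:
`lim_{α→∞} (x̂_{n,k}^{(α)} - α)/√(2α) = h_{n-1,k-1}`. -/
lemma lag_rec (α x : ℝ) (m : ℕ) :
    ((m:ℝ)+2) * laguerreL α (m+2) x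
      = (2*(m:ℝ)+3+α-x) * laguerreL α (m+1) x - ((m:ℝ)+1+α) * laguerreL α m x := by
  classical
  set c : ℕ → ℕ → ℝ := fun M k => (-1:ℝ)^k / (Nat.factorial k : ℝ) *
    ((∏ j ∈ Finset.Icc (k+1) M, (α + (j:ℝ))) / (Nat.factorial (M-k) : ℝ)) with hc
  have hL : ∀ M, laguerreL α M x = ∑ k ∈ Finset.range (M+1), c M k * x^k := fun M => rfl
  have h1 : laguerreL α (m+1) x
      = ∑ k ∈ Finset.range (m+3), (if k ≤ m+1 then c (m+1) k else 0) * x^k := by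
    rw [hL, show (∑ k ∈ Finset.range (m+1+1), c (m+1) k * x^k)
        = ∑ k ∈ Finset.range (m+1+1), (if k ≤ m+1 then c (m+1) k else 0) * x^k from
      Finset.sum_congr rfl fun k hk => by
        rw [if_pos (show k ≤ m+1 by rw [Finset.mem_range] at hk; omega)]]
    exact Finset.sum_subset (Finset.range_subset_range.2 (by omega)) (fun k _ hk' => by
      rw [if_neg (show ¬ k ≤ m+1 by rw [Finset.mem_range] at hk'; omega), zero_mul])
  have h0 : laguerreL α m x
      = ∑ k ∈ Finset.range (m+3), (if k ≤ m then c m k else 0) * x^k := by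
    rw [hL, show (∑ k ∈ Finset.range (m+1), c m k * x^k)
        = ∑ k ∈ Finset.range (m+1), (if k ≤ m then c m k else 0) * x^k from
      Finset.sum_congr rfl fun k hk => by
        rw [if_pos (show k ≤ m by rw [Finset.mem_range] at hk; omega)]]
    exact Finset.sum_subset (Finset.range_subset_range.2 (by omega)) (fun k _ hk' => by
      rw [if_neg (show ¬ k ≤ m by rw [Finset.mem_range] at hk'; omega), zero_mul])
  have hx : x * laguerreL α (m+1) x
      = ∑ k ∈ Finset.range (m+3), (if 1 ≤ k then c (m+1) (k-1) else 0) * x^k := by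
    rw [hL, Finset.mul_sum]
    rw [Finset.sum_range_succ' (fun k => (if 1 ≤ k then c (m+1) (k-1) else 0) * x^k) (m+2)]
    simp only [if_neg (show ¬ (1:ℕ) ≤ 0 by omega), zero_mul, add_zero]
    exact Finset.sum_congr rfl fun k hk => by
      rw [if_pos (show 1 ≤ k+1 by omega), Nat.add_sub_cancel]; ring
  have key : ∀ k ∈ Finset.range (m+3),
      ((m:ℝ)+2) * (c (m+2) k * x^k)
        = (2*(m:ℝ)+3+α) * ((if k ≤ m+1 then c (m+1) k else 0) * x^k)
          - (if 1 ≤ k then c (m+1) (k-1) else 0) * x^k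
          - ((m:ℝ)+1+α) * ((if k ≤ m then c m k else 0) * x^k) := by
    intro k hk
    rw [Finset.mem_range] at hk
    rcases Nat.lt_or_ge k (m+1) with hkm | hkm
    · -- k ≤ m
      have hkm' : k ≤ m := by omega
      rw [if_pos (show k ≤ m+1 by omega), if_pos (show k ≤ m from hkm')]
      obtain ⟨d, rfl⟩ : ∃ d, m = k + d := ⟨m - k, by omega⟩
      have p1 : (∏ j ∈ Finset.Icc (k+1) (k+d+1), (α + (j:ℝ)))
          = (∏ j ∈ Finset.Icc (k+1) (k+d), (α + (j:ℝ))) * (α + ((k:ℝ)+(d:ℝ)+1)) := by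
        rw [Finset.prod_Icc_succ_top (by omega)]; push_cast; ring
      have p2 : (∏ j ∈ Finset.Icc (k+1) (k+d+2), (α + (j:ℝ)))
          = (∏ j ∈ Finset.Icc (k+1) (k+d), (α + (j:ℝ))) * (α + ((k:ℝ)+(d:ℝ)+1)) * (α + ((k:ℝ)+(d:ℝ)+2)) := by
        rw [Finset.prod_Icc_succ_top (by omega), Finset.prod_Icc_succ_top (by omega)]
        push_cast; ring
      have s0 : k + d - k = d := by omega
      have s1 : k + d + 1 - k = d + 1 := by omega
      have s2 : k + d + 2 - k = d + 2 := by omega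
      have hd0 : ((Nat.factorial d : ℝ)) ≠ 0 := Nat.cast_ne_zero.2 (Nat.factorial_ne_zero d)
      have hk0 : ((Nat.factorial k : ℝ)) ≠ 0 := Nat.cast_ne_zero.2 (Nat.factorial_ne_zero k)
      rcases Nat.eq_zero_or_pos k with rfl | hk1
      · -- k = 0
        rw [if_neg (show ¬ (1:ℕ) ≤ 0 by omega)]
        simp only [hc, s0, s1, s2]
        rw [p1, p2]
        simp only [Nat.factorial_succ]
        push_cast
        field_simp
        ring
      · obtain ⟨j, rfl⟩ : ∃ j, k = j + 1 := ⟨k - 1, by omega⟩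
        rw [if_pos (show 1 ≤ j+1 by omega), Nat.add_sub_cancel]
        have p3 : (∏ i ∈ Finset.Icc (j+1) (j+1+d+1), (α + (i:ℝ)))
            = (α + ((j:ℝ)+1)) * (∏ i ∈ Finset.Icc (j+1+1) (j+1+d), (α + (i:ℝ))) * (α + ((j:ℝ)+(d:ℝ)+2)) := by
          rw [Finset.prod_Icc_succ_top (by omega)]
          rw [show Finset.Icc (j+1) (j+1+d) = Finset.Ico (j+1) (j+1+d+1) by
            rw [Finset.Ico_add_one_right_eq_Icc]]
          rw [Finset.prod_eq_prod_Ico_succ_bot (by omega)]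
          rw [Finset.Ico_add_one_right_eq_Icc]
          push_cast; ring
        have s3 : j + 1 + d + 1 - j = d + 2 := by omega
        simp only [hc, s0, s1, s2, s3]
        rw [p1, p2, p3]
        simp only [Nat.factorial_succ]
        have hj0 : ((Nat.factorial j : ℝ)) ≠ 0 := Nat.cast_ne_zero.2 (Nat.factorial_ne_zero j)
        push_cast
        field_simp
        ring
    · -- k = m+1 or k = m+2
      rcases Nat.lt_or_ge k (m+2) with hkk | hkk
      · -- k = m+1
        obtain rfl : k = m + 1 := by omega
        rw [if_pos (show m+1 ≤ m+1 from le_refl _), if_pos (show 1 ≤ m+1 by omega),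
          if_neg (show ¬ m+1 ≤ m by omega)]
        simp only [show m+1-1 = m by omega]
        have s1 : m + 1 - (m+1) = 0 := by omega
        have s2 : m + 2 - (m+1) = 1 := by omega
        have s5 : m + 1 - m = 1 := by omega
        have p2 : (∏ j ∈ Finset.Icc (m+1+1) (m+2), (α + (j:ℝ))) = α + ((m:ℝ)+2) := by
          rw [show Finset.Icc (m+1+1) (m+2) = {m+2} from by
            rw [show m+1+1 = m+2 from rfl, Finset.Icc_self], Finset.prod_singleton]
          push_cast; ring
        have p1 : (∏ j ∈ Finset.Icc (m+1+1) (m+1), (α + (j:ℝ))) = 1 := by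
          rw [Finset.Icc_eq_empty (by omega), Finset.prod_empty]
        have p3 : (∏ j ∈ Finset.Icc (m+1) (m+1), (α + (j:ℝ))) = α + ((m:ℝ)+1) := by
          rw [Finset.Icc_self, Finset.prod_singleton]; push_cast; ring
        simp only [hc, s1, s2, s5, p2, p1, p3]
        simp only [Nat.factorial_succ, Nat.factorial_zero, Nat.factorial_one]
        have hm0 : ((Nat.factorial m : ℝ)) ≠ 0 := Nat.cast_ne_zero.2 (Nat.factorial_ne_zero m)
        push_cast
        field_simp
        ring
      · -- k = m+2
        obtain rfl : k = m + 2 := by omega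
        rw [if_neg (show ¬ m+2 ≤ m+1 by omega), if_pos (show 1 ≤ m+2 by omega),
          if_neg (show ¬ m+2 ≤ m by omega)]
        simp only [show m+2-1 = m+1 by omega]
        have s1 : m + 2 - (m+2) = 0 := by omega
        have s3 : m + 1 - (m+1) = 0 := by omega
        have p2 : (∏ j ∈ Finset.Icc (m+2+1) (m+2), (α + (j:ℝ))) = 1 := by
          rw [Finset.Icc_eq_empty (by omega), Finset.prod_empty]
        have p3 : (∏ j ∈ Finset.Icc (m+1+1) (m+1), (α + (j:ℝ))) = 1 := by
          rw [Finset.Icc_eq_empty (by omega), Finset.prod_empty]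
        simp only [hc, s1, s3, p2, p3]
        simp only [Nat.factorial_succ, Nat.factorial_zero]
        have hm0 : ((Nat.factorial m : ℝ)) ≠ 0 := Nat.cast_ne_zero.2 (Nat.factorial_ne_zero m)
        have hm1 : ((Nat.factorial (m+1) : ℝ)) ≠ 0 := Nat.cast_ne_zero.2 (Nat.factorial_ne_zero _)
        push_cast [Nat.factorial_succ]
        field_simp
        ring
  calc ((m:ℝ)+2) * laguerreL α (m+2) x
      = ∑ k ∈ Finset.range (m+3), ((m:ℝ)+2) * (c (m+2) k * x^k) := by
        rw [hL]; rw [Finset.mul_sum]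
    _ = ∑ k ∈ Finset.range (m+3),
          ((2*(m:ℝ)+3+α) * ((if k ≤ m+1 then c (m+1) k else 0) * x^k)
            - (if 1 ≤ k then c (m+1) (k-1) else 0) * x^k
            - ((m:ℝ)+1+α) * ((if k ≤ m then c m k else 0) * x^k)) :=
        Finset.sum_congr rfl key
    _ = (2*(m:ℝ)+3+α-x) * laguerreL α (m+1) x - ((m:ℝ)+1+α) * laguerreL α m x := by
        rw [show (2*(m:ℝ)+3+α-x) * laguerreL α (m+1) x
            = (2*(m:ℝ)+3+α) * laguerreL α (m+1) x - x * laguerreL α (m+1) x by ring]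
        rw [hx, h1, h0, Finset.mul_sum, Finset.mul_sum, ← Finset.sum_sub_distrib,
          ← Finset.sum_sub_distrib]

lemma herm_rec (x : ℝ) (m : ℕ) :
    hermiteH (m+2) x = 2*x * hermiteH (m+1) x - 2*((m:ℝ)+1) * hermiteH m x := by
  classical
  set b : ℕ → ℕ → ℝ := fun M j => (Nat.factorial M : ℝ) *
    ((-1:ℝ)^j / ((Nat.factorial j : ℝ) * (Nat.factorial (M - 2*j) : ℝ))) with hb
  have hH : ∀ M, hermiteH M x = ∑ j ∈ Finset.range (M/2+1), b M j * (2*x)^(M-2*j) := by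
    intro M
    rw [hermiteH, Finset.mul_sum]
    exact Finset.sum_congr rfl fun j _ => by ring
  have hR : (m+2)/2 + 1 = m/2 + 2 := by omega
  have hLHS : hermiteH (m+2) x
      = ∑ j ∈ Finset.range (m/2+2), b (m+2) j * (2*x)^(m+2-2*j) := by
    rw [hH, hR]
  have hH1 : 2*x * hermiteH (m+1) x
      = ∑ j ∈ Finset.range (m/2+2),
          (if j ≤ (m+1)/2 then b (m+1) j else 0) * (2*x)^(m+2-2*j) := by
    rw [hH, Finset.mul_sum]
    rw [show (∑ j ∈ Finset.range ((m+1)/2+1), 2*x*(b (m+1) j * (2*x)^(m+1-2*j)))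
        = ∑ j ∈ Finset.range ((m+1)/2+1),
            (if j ≤ (m+1)/2 then b (m+1) j else 0) * (2*x)^(m+2-2*j) from
      Finset.sum_congr rfl fun j hj => by
        rw [Finset.mem_range] at hj
        rw [if_pos (show j ≤ (m+1)/2 by omega),
          show m+2-2*j = (m+1-2*j)+1 by omega, pow_succ]
        ring]
    exact Finset.sum_subset (Finset.range_subset_range.2 (by omega)) (fun j _ hj' => by
      rw [if_neg (show ¬ j ≤ (m+1)/2 by rw [Finset.mem_range] at hj'; omega), zero_mul])
  have hH0 : (-2*((m:ℝ)+1)) * hermiteH m x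
      = ∑ j ∈ Finset.range (m/2+2),
          (if 1 ≤ j ∧ j ≤ m/2+1 then (-2*((m:ℝ)+1)) * b m (j-1) else 0) * (2*x)^(m+2-2*j) := by
    rw [hH, Finset.mul_sum]
    rw [Finset.sum_range_succ' (fun j =>
      (if 1 ≤ j ∧ j ≤ m/2+1 then (-2*((m:ℝ)+1)) * b m (j-1) else 0) * (2*x)^(m+2-2*j)) (m/2+1)]
    rw [if_neg (by omega), zero_mul, add_zero]
    exact Finset.sum_congr rfl fun j hj => by
      rw [Finset.mem_range] at hj
      rw [if_pos (by omega), Nat.add_sub_cancel,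
        show m+2-2*(j+1) = m-2*j by omega]
      ring
  have key : ∀ j ∈ Finset.range (m/2+2),
      b (m+2) j * (2*x)^(m+2-2*j)
        = (if j ≤ (m+1)/2 then b (m+1) j else 0) * (2*x)^(m+2-2*j)
          + (if 1 ≤ j ∧ j ≤ m/2+1 then (-2*((m:ℝ)+1)) * b m (j-1) else 0) * (2*x)^(m+2-2*j) := by
    intro j hj
    rw [Finset.mem_range] at hj
    have hm0 : ((Nat.factorial m : ℝ)) ≠ 0 := Nat.cast_ne_zero.2 (Nat.factorial_ne_zero m)
    have f2 : ((Nat.factorial (m+2) : ℝ)) = ((m:ℝ)+2)*((m:ℝ)+1)*(Nat.factorial m : ℝ) := by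
      rw [Nat.factorial_succ, Nat.factorial_succ]; push_cast; ring
    have f1 : ((Nat.factorial (m+1) : ℝ)) = ((m:ℝ)+1)*(Nat.factorial m : ℝ) := by
      rw [Nat.factorial_succ]; push_cast; ring
    rcases Nat.eq_zero_or_pos j with rfl | hj1
    · rw [if_pos (by omega), if_neg (by omega)]
      suffices hsuf : b (m+2) 0 = b (m+1) 0 by rw [hsuf]; ring
      simp only [hb, Nat.mul_zero, Nat.sub_zero, pow_zero, Nat.factorial_zero]
      rw [f2, f1]
      field_simp
    · obtain ⟨i, rfl⟩ : ∃ i, j = i + 1 := ⟨j - 1, by omega⟩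
      rcases Nat.lt_or_ge ((m+1)/2) (i+1) with htop | hmid
      · -- top case: m even, i+1 = m/2+1
        have hmeven : ∃ i', m = 2*i' := ⟨m/2, by omega⟩
        obtain ⟨i', rfl⟩ := hmeven
        obtain rfl : i = i' := by omega
        rw [if_neg (by omega), if_pos (by constructor <;> omega)]
        rw [Nat.add_sub_cancel]
        suffices hsuf : b (2*i+2) (i+1) = (-2*((2*i:ℝ)+1)) * b (2*i) i by
          rw [show (2*i:ℕ)+2 = 2*i+2 from rfl] at hsuf
          rw [hsuf]; push_cast; ring
        simp only [hb]
        rw [show (2*i+2) - 2*(i+1) = 0 by omega, show 2*i - 2*i = 0 by omega]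
        rw [show Nat.factorial (2*i+2) = (2*i+2)*((2*i+1)*(Nat.factorial (2*i))) from by
          rw [← Nat.factorial_succ, ← Nat.factorial_succ]]
        rw [Nat.factorial_succ i, Nat.factorial_zero]
        have hi0 : ((Nat.factorial i : ℝ)) ≠ 0 := Nat.cast_ne_zero.2 (Nat.factorial_ne_zero i)
        have h2i0 : ((Nat.factorial (2*i) : ℝ)) ≠ 0 := Nat.cast_ne_zero.2 (Nat.factorial_ne_zero _)
        push_cast
        field_simp
        ring
      · -- middle case
        rw [if_pos hmid, if_pos (by constructor <;> omega), Nat.add_sub_cancel]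
        obtain ⟨r, hr⟩ : ∃ r, m + 1 = 2*(i+1) + r := ⟨m+1-2*(i+1), by omega⟩
        suffices hsuf : b (m+2) (i+1) = b (m+1) (i+1) + (-2*((m:ℝ)+1)) * b m i by
          rw [hsuf]; ring
        simp only [hb]
        rw [show m+2-2*(i+1) = r+1 by omega, show m+1-2*(i+1) = r by omega,
          show m-2*i = r+1 by omega]
        rw [f2, f1, Nat.factorial_succ i, Nat.factorial_succ r]
        have hi0 : ((Nat.factorial i : ℝ)) ≠ 0 := Nat.cast_ne_zero.2 (Nat.factorial_ne_zero i)
        have hr0 : ((Nat.factorial r : ℝ)) ≠ 0 := Nat.cast_ne_zero.2 (Nat.factorial_ne_zero r)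
        have hmr : (m:ℝ) = 2*(i:ℝ) + (r:ℝ) + 1 := by
          have : (m:ℕ) = 2*i + r + 1 := by omega
          rw [this]; push_cast; ring
        rw [hmr]
        push_cast
        field_simp
        ring
  have : hermiteH (m+2) x
      = 2*x * hermiteH (m+1) x + (-2*((m:ℝ)+1)) * hermiteH m x := by
    rw [hLHS, hH1, hH0, ← Finset.sum_add_distrib]
    exact Finset.sum_congr rfl key
  rw [this]; ring

lemma lag_zero (α x : ℝ) : laguerreL α 0 x = 1 := by
  simp [laguerreL]

lemma lag_one (α x : ℝ) : laguerreL α 1 x = α + 1 - x := by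
  simp [laguerreL, Finset.sum_range_succ]; ring

lemma herm_zero (x : ℝ) : hermiteH 0 x = 1 := by simp [hermiteH]

lemma herm_one (x : ℝ) : hermiteH 1 x = 2 * x := by simp [hermiteH]

lemma sqrt2a_tendsto : Tendsto (fun α : ℝ => Real.sqrt (2*α)) atTop atTop := by
  apply Filter.tendsto_atTop.2
  intro b
  filter_upwards [eventually_ge_atTop (b^2/2)] with α hα
  calc b ≤ |b| := le_abs_self b
    _ = Real.sqrt (b^2) := (Real.sqrt_sq_eq_abs b).symm
    _ ≤ Real.sqrt (2*α) := Real.sqrt_le_sqrt (by nlinarith)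

lemma inv_sqrt2a_tendsto : Tendsto (fun α : ℝ => 1 / Real.sqrt (2*α)) atTop (nhds 0) := by
  simp only [one_div]
  exact sqrt2a_tendsto.inv_tendsto_atTop

noncomputable def cherm (m : ℕ) (t : ℝ) : ℝ :=
  (-1)^m * hermiteH m t / (2^m * (Nat.factorial m : ℝ))

lemma lag_limit (t : ℝ) : ∀ m : ℕ,
    Tendsto (fun α : ℝ => laguerreL α m (α + Real.sqrt (2*α) * t) / (Real.sqrt (2*α))^m)
      atTop (nhds (cherm m t)) := by
  have base0 : Tendsto (fun α : ℝ => laguerreL α 0 (α + Real.sqrt (2*α) * t) / (Real.sqrt (2*α))^0)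
      atTop (nhds (cherm 0 t)) := by
    have : ∀ α : ℝ, laguerreL α 0 (α + Real.sqrt (2*α) * t) / (Real.sqrt (2*α))^0 = 1 := by
      intro α; rw [lag_zero]; simp
    simp only [this]
    have : cherm 0 t = 1 := by simp [cherm, herm_zero]
    rw [this]; exact tendsto_const_nhds
  have base1 : Tendsto (fun α : ℝ => laguerreL α 1 (α + Real.sqrt (2*α) * t) / (Real.sqrt (2*α))^1)
      atTop (nhds (cherm 1 t)) := by
    have hval : cherm 1 t = 0 - t := by
      show (-1:ℝ)^1 * hermiteH 1 t / (2^1 * (Nat.factorial 1 : ℝ)) = 0 - t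
      rw [herm_one]; norm_num
      ring
    rw [hval]
    apply Tendsto.congr' _ (inv_sqrt2a_tendsto.sub tendsto_const_nhds)
    filter_upwards [eventually_gt_atTop (0:ℝ)] with α hα
    have hs : 0 < Real.sqrt (2*α) := Real.sqrt_pos.2 (by linarith)
    rw [lag_one]
    field_simp
    ring
  -- two-step induction
  have step : ∀ m : ℕ,
      Tendsto (fun α : ℝ => laguerreL α m (α + Real.sqrt (2*α) * t) / (Real.sqrt (2*α))^m)
        atTop (nhds (cherm m t)) →
      Tendsto (fun α : ℝ => laguerreL α (m+1) (α + Real.sqrt (2*α) * t) / (Real.sqrt (2*α))^(m+1))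
        atTop (nhds (cherm (m+1) t)) →
      Tendsto (fun α : ℝ => laguerreL α (m+2) (α + Real.sqrt (2*α) * t) / (Real.sqrt (2*α))^(m+2))
        atTop (nhds (cherm (m+2) t)) := by
    intro m IH0 IH1
    set s : ℝ → ℝ := fun α => Real.sqrt (2*α) with hsdef
    have hmain : Tendsto (fun α : ℝ =>
        (1/((m:ℝ)+2)) * (((2*(m:ℝ)+3)*(1/s α) - t)
            * (laguerreL α (m+1) (α + s α * t) / (s α)^(m+1))
          - (1/2 + ((m:ℝ)+1)*(1/s α)^2)
            * (laguerreL α m (α + s α * t) / (s α)^m)))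
        atTop (nhds ((1/((m:ℝ)+2)) * (((2*(m:ℝ)+3)*0 - t) * cherm (m+1) t
          - (1/2 + ((m:ℝ)+1)*0^2) * cherm m t))) := by
      apply Tendsto.const_mul
      exact (((inv_sqrt2a_tendsto.const_mul _).sub tendsto_const_nhds).mul IH1).sub
        ((tendsto_const_nhds.add ((inv_sqrt2a_tendsto.pow 2).const_mul _)).mul IH0)
    have hval : (1/((m:ℝ)+2)) * (((2*(m:ℝ)+3)*0 - t) * cherm (m+1) t
        - (1/2 + ((m:ℝ)+1)*0^2) * cherm m t) = cherm (m+2) t := by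
      simp only [cherm, herm_rec t m]
      have h1 : ((Nat.factorial (m+2) : ℝ)) = ((m:ℝ)+2)*((m:ℝ)+1)*(Nat.factorial m : ℝ) := by
        rw [Nat.factorial_succ, Nat.factorial_succ]; push_cast; ring
      have h2 : ((Nat.factorial (m+1) : ℝ)) = ((m:ℝ)+1)*(Nat.factorial m : ℝ) := by
        rw [Nat.factorial_succ]; push_cast; ring
      rw [h1, h2]
      have hm0 : ((Nat.factorial m : ℝ)) ≠ 0 := Nat.cast_ne_zero.2 (Nat.factorial_ne_zero m)
      have hm2 : ((m:ℝ)+2) ≠ 0 := by positivity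
      have hm1 : ((m:ℝ)+1) ≠ 0 := by positivity
      field_simp
      ring
    rw [hval] at hmain
    have alg : ∀ S A B C : ℝ, S ≠ 0 →
        ((m:ℝ)+2)*C = (2*(m:ℝ)+3 - S*t)*A - ((m:ℝ)+1+S^2/2)*B →
        C / S^(m+2) = (1/((m:ℝ)+2)) * (((2*(m:ℝ)+3)*(1/S) - t) * (A/S^(m+1))
          - (1/2 + ((m:ℝ)+1)*(1/S)^2) * (B/S^m)) := by
      intro S A B C hS hC
      have hm2 : ((m:ℝ)+2) ≠ 0 := by positivity
      have hCval : C = ((2*(m:ℝ)+3 - S*t)*A - ((m:ℝ)+1+S^2/2)*B)/((m:ℝ)+2) := by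
        rw [eq_div_iff hm2]
        linear_combination hC
      rw [hCval, pow_succ, pow_succ]
      field_simp
      ring
    apply Tendsto.congr' _ hmain
    filter_upwards [eventually_gt_atTop (0:ℝ)] with α hα
    have hs : 0 < s α := Real.sqrt_pos.2 (by linarith)
    have hs2 : s α ^ 2 = 2*α := Real.sq_sqrt (by linarith)
    have hrec := lag_rec α (α + s α * t) m
    exact (alg (s α) (laguerreL α (m+1) (α + s α * t)) (laguerreL α m (α + s α * t))
      (laguerreL α (m+2) (α + s α * t)) (ne_of_gt hs)
      (by linear_combination hrec + (laguerreL α m (α + s α * t)/2) * hs2)).symm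
  intro m
  induction m using Nat.twoStepInduction with
  | zero => exact base0
  | one => exact base1
  | more m ih0 ih1 => exact step m ih0 ih1

noncomputable def hermPoly (m : ℕ) : Polynomial ℝ :=
  Polynomial.C ((Nat.factorial m : ℝ)) *
    ∑ j ∈ Finset.range (m / 2 + 1),
      Polynomial.C ((-1:ℝ)^j / ((Nat.factorial j : ℝ) * (Nat.factorial (m - 2*j) : ℝ))) *
        (Polynomial.C 2 * Polynomial.X)^(m - 2*j)

lemma hermPoly_eval (m : ℕ) (x : ℝ) : (hermPoly m).eval x = hermiteH m x := by
  simp [hermPoly, hermiteH, Polynomial.eval_finset_sum]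

lemma hermPoly_natDegree_le (m : ℕ) : (hermPoly m).natDegree ≤ m := by
  refine le_trans (Polynomial.natDegree_C_mul_le _ _) ?_
  apply Polynomial.natDegree_sum_le_of_forall_le
  intro j _
  refine le_trans Polynomial.natDegree_mul_le ?_
  simp only [Polynomial.natDegree_C, zero_add]
  refine le_trans (Polynomial.natDegree_pow_le) ?_
  have : (Polynomial.C (2:ℝ) * Polynomial.X).natDegree = 1 := by
    simpa using Polynomial.natDegree_C_mul_X (2:ℝ) (by norm_num)
  rw [this]; omega

lemma hermPoly_coeff_top (m : ℕ) (hm : 1 ≤ m) : (hermPoly m).coeff m = 2^m := by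
  rw [hermPoly, Polynomial.coeff_C_mul, Polynomial.finset_sum_coeff]
  have : ∀ j ∈ Finset.range (m/2+1),
      (Polynomial.C ((-1:ℝ)^j / ((Nat.factorial j : ℝ) * (Nat.factorial (m - 2*j) : ℝ))) *
        (Polynomial.C 2 * Polynomial.X)^(m - 2*j)).coeff m
      = if j = 0 then ((2:ℝ)^m / (Nat.factorial m : ℝ)) else 0 := by
    intro j hj
    rw [Finset.mem_range] at hj
    rw [mul_pow, ← Polynomial.C_pow, ← mul_assoc, ← Polynomial.C_mul,
      Polynomial.coeff_C_mul, Polynomial.coeff_X_pow]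
    rcases Nat.eq_zero_or_pos j with rfl | hj1
    · rw [if_pos rfl, if_pos (by omega)]
      simp [Nat.factorial_zero]
      ring
    · rw [if_neg (by omega), if_neg (by omega), mul_zero]
  rw [Finset.sum_congr rfl this, Finset.sum_ite_eq' (Finset.range (m/2+1)) 0
    (fun _ => ((2:ℝ)^m / (Nat.factorial m : ℝ)))]
  rw [if_pos (Finset.mem_range.2 (by omega))]
  have hm0 : ((Nat.factorial m : ℝ)) ≠ 0 := Nat.cast_ne_zero.2 (Nat.factorial_ne_zero m)
  field_simp

lemma herm_factor {m : ℕ} {h : ℕ → ℝ} (hm : 1 ≤ m)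
    (hh : EnumZeros (hermiteH m) m h) (t : ℝ) :
    hermiteH m t = 2^m * ∏ i ∈ Finset.Icc 1 m, (t - h i) := by
  classical
  set q : Polynomial ℝ :=
    Polynomial.C ((2:ℝ)^m) * ∏ i ∈ Finset.Icc 1 m, (Polynomial.X - Polynomial.C (h i)) with hq
  have hprodmonic : (∏ i ∈ Finset.Icc 1 m, (Polynomial.X - Polynomial.C (h i))).Monic :=
    Polynomial.monic_prod_of_monic _ _ (fun i _ => Polynomial.monic_X_sub_C _)
  have hproddeg : (∏ i ∈ Finset.Icc 1 m, (Polynomial.X - Polynomial.C (h i))).natDegree = m := by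
    rw [Polynomial.natDegree_prod _ _ (fun i _ => Polynomial.X_sub_C_ne_zero _)]
    simp [Polynomial.natDegree_X_sub_C]
  have hqdeg : q.natDegree ≤ m := by
    rw [hq]
    refine le_trans (Polynomial.natDegree_C_mul_le _ _) (le_of_eq hproddeg)
  have hc1 : (∏ i ∈ Finset.Icc 1 m, (Polynomial.X - Polynomial.C (h i))).coeff m = 1 := by
    have hc := hprodmonic.coeff_natDegree
    rw [hproddeg] at hc
    exact hc
  have hqcoeff : q.coeff m = 2^m := by
    rw [hq, Polynomial.coeff_C_mul, hc1, mul_one]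
  have hinj : Set.InjOn h (Finset.Icc 1 m : Finset ℕ) := by
    rw [Finset.coe_Icc]
    exact hh.1.injOn
  have hcard : ((Finset.Icc 1 m).image h).card = m := by
    rw [Finset.card_image_of_injOn hinj, Nat.card_Icc]; omega
  have hzero : hermPoly m - q = 0 := by
    by_contra hr
    have hle : (hermPoly m - q).natDegree ≤ m :=
      le_trans (Polynomial.natDegree_sub_le _ _) (max_le (hermPoly_natDegree_le m) hqdeg)
    have hne : (hermPoly m - q).natDegree ≠ m := by
      intro hEq
      apply hr
      rw [← Polynomial.leadingCoeff_eq_zero, Polynomial.leadingCoeff, hEq,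
        Polynomial.coeff_sub, hermPoly_coeff_top m hm, hqcoeff, sub_self]
    have hlt : (hermPoly m - q).natDegree < m := lt_of_le_of_ne hle hne
    apply hr
    apply Polynomial.eq_zero_of_natDegree_lt_card_of_eval_eq_zero' _ ((Finset.Icc 1 m).image h)
    · intro y hy
      rw [Finset.mem_image] at hy
      obtain ⟨i, hi, rfl⟩ := hy
      rw [Finset.mem_Icc] at hi
      rw [Polynomial.eval_sub, hermPoly_eval]
      have h1 : hermiteH m (h i) = 0 := (hh.2 (h i)).2 ⟨i, hi.1, hi.2, rfl⟩
      have h2 : q.eval (h i) = 0 := by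
        rw [hq, Polynomial.eval_mul, Polynomial.eval_prod]
        have : ∏ j ∈ Finset.Icc 1 m, (Polynomial.X - Polynomial.C (h j)).eval (h i) = 0 :=
          Finset.prod_eq_zero (Finset.mem_Icc.2 hi) (by simp)
        rw [this, mul_zero]
      rw [h1, h2, sub_zero]
    · rw [hcard]; exact hlt
  have heq : hermPoly m = q := by
    have := sub_eq_zero.1 hzero; exact this
  calc hermiteH m t = (hermPoly m).eval t := (hermPoly_eval m t).symm
    _ = q.eval t := by rw [heq]
    _ = 2^m * ∏ i ∈ Finset.Icc 1 m, (t - h i) := by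
        rw [hq, Polynomial.eval_mul, Polynomial.eval_prod]
        simp

lemma enum_le {N : ℕ} {f g : ℕ → ℝ} (hf : StrictMonoOn f (Set.Icc 1 N))
    (hg : StrictMonoOn g (Set.Icc 1 N))
    (hgf : ∀ i, 1 ≤ i → i ≤ N → ∃ j, 1 ≤ j ∧ j ≤ N ∧ g i = f j) :
    ∀ i, 1 ≤ i → i ≤ N → f i ≤ g i := by
  intro i hi1 hin
  by_contra hlt
  push_neg at hlt
  have hsub : (Finset.Icc 1 i).image g ⊆ (Finset.Icc 1 (i-1)).image f := by
    intro y hy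
    rw [Finset.mem_image] at hy ⊢
    obtain ⟨a, ha, rfl⟩ := hy
    rw [Finset.mem_Icc] at ha
    obtain ⟨j, hj1, hjn, hgj⟩ := hgf a ha.1 (le_trans ha.2 hin)
    refine ⟨j, Finset.mem_Icc.2 ⟨hj1, ?_⟩, hgj.symm⟩
    have hga : g a ≤ g i :=
      hg.monotoneOn (Set.mem_Icc.2 ⟨ha.1, le_trans ha.2 hin⟩) (Set.mem_Icc.2 ⟨hi1, hin⟩) ha.2
    have hji : j < i := by
      by_contra hji
      push_neg at hji
      have := hf.monotoneOn (Set.mem_Icc.2 ⟨hi1, hin⟩) (Set.mem_Icc.2 ⟨hj1, hjn⟩) hji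
      rw [← hgj] at this
      linarith
    omega
  have hinj : Set.InjOn g ((Finset.Icc 1 i : Finset ℕ) : Set ℕ) := by
    rw [Finset.coe_Icc]
    exact hg.injOn.mono (Set.Icc_subset_Icc le_rfl hin)
  have hcard1 : ((Finset.Icc 1 i).image g).card = i := by
    rw [Finset.card_image_of_injOn hinj, Nat.card_Icc]; omega
  have hcard2 : ((Finset.Icc 1 (i-1)).image f).card ≤ i - 1 :=
    le_trans Finset.card_image_le (by rw [Nat.card_Icc]; omega)
  have := Finset.card_le_card hsub
  omega

lemma enum_unique {N : ℕ} {f g : ℕ → ℝ} (hf : StrictMonoOn f (Set.Icc 1 N))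
    (hg : StrictMonoOn g (Set.Icc 1 N))
    (hfg : ∀ i, 1 ≤ i → i ≤ N → ∃ j, 1 ≤ j ∧ j ≤ N ∧ f i = g j)
    (hgf : ∀ i, 1 ≤ i → i ≤ N → ∃ j, 1 ≤ j ∧ j ≤ N ∧ g i = f j) :
    ∀ i, 1 ≤ i → i ≤ N → f i = g i := fun i hi1 hin =>
  le_antisymm (enum_le hf hg hgf i hi1 hin) (enum_le hg hf hfg i hi1 hin)

lemma X1_eq (α x : ℝ) (m : ℕ) :
    X1laguerreL α (m+2) x = -(x+α+1) * laguerreL α (m+1) x + laguerreL α m x := by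
  simp [X1laguerreL]

lemma lag_cont (α : ℝ) (M : ℕ) : Continuous (fun x : ℝ => laguerreL α M x) := by
  apply continuous_finset_sum
  intro k _
  exact continuous_const.mul (continuous_pow k)

lemma X1_cont (α : ℝ) (m : ℕ) : Continuous (fun x : ℝ => X1laguerreL α (m+2) x) := by
  simp only [X1_eq]
  exact ((((continuous_id.add continuous_const).add continuous_const).neg).mul
    (lag_cont α _)).add (lag_cont α _)

lemma lag_at_zero (α : ℝ) (M : ℕ) :
    laguerreL α M 0 = (∏ j ∈ Finset.Icc 1 M, (α + (j : ℝ))) / (Nat.factorial M : ℝ) := by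
  rw [laguerreL, Finset.sum_eq_single 0]
  · simp
  · intro k _ hk0
    simp [zero_pow hk0]
  · intro hmem
    exact absurd (Finset.mem_range.2 (by omega)) hmem

lemma prod_shift_pos {α : ℝ} (hα : 0 < α) (M : ℕ) :
    0 < ∏ j ∈ Finset.Icc 1 M, (α + (j : ℝ)) := by
  apply Finset.prod_pos
  intro j _
  have : (0:ℝ) ≤ (j:ℝ) := Nat.cast_nonneg j
  linarith

lemma X1_at_zero_neg (m : ℕ) {α : ℝ} (hα : 1 ≤ α) : X1laguerreL α (m+2) 0 < 0 := by
  rw [X1_eq, lag_at_zero, lag_at_zero]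
  have hsplit : (∏ j ∈ Finset.Icc 1 (m+1), (α + (j:ℝ)))
      = (∏ j ∈ Finset.Icc 1 m, (α + (j:ℝ))) * (α + ((m:ℝ)+1)) := by
    rw [Finset.prod_Icc_succ_top (by omega)]
    push_cast; ring
  rw [hsplit]
  have hP : 0 < ∏ j ∈ Finset.Icc 1 m, (α + (j:ℝ)) := prod_shift_pos (by linarith) m
  have hm0 : (0:ℝ) < (Nat.factorial m : ℝ) := by
    exact_mod_cast Nat.factorial_pos m
  have hfs : ((Nat.factorial (m+1) : ℝ)) = ((m:ℝ)+1) * (Nat.factorial m : ℝ) := by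
    rw [Nat.factorial_succ]; push_cast; ring
  rw [hfs]
  have heq : -(0+α+1) * ((∏ j ∈ Finset.Icc 1 m, (α + (j:ℝ))) * (α + ((m:ℝ)+1)) /
        (((m:ℝ)+1) * (Nat.factorial m : ℝ)))
      + (∏ j ∈ Finset.Icc 1 m, (α + (j:ℝ))) / (Nat.factorial m : ℝ)
      = ((∏ j ∈ Finset.Icc 1 m, (α + (j:ℝ))) / (((m:ℝ)+1) * (Nat.factorial m : ℝ)))
        * (((m:ℝ)+1) - (α+1)*(α+((m:ℝ)+1))) := by
    field_simp
    ring
  rw [heq]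
  apply mul_neg_of_pos_of_neg
  · positivity
  · have hm : (0:ℝ) ≤ (m:ℝ) := Nat.cast_nonneg m
    nlinarith

lemma X1_at_neg_pos (m : ℕ) {α : ℝ} (hα : 0 < α) : 0 < X1laguerreL α (m+2) (-(α+1)) := by
  rw [X1_eq]
  have h0 : -(-(α+1)+α+1) * laguerreL α (m+1) (-(α+1)) = 0 := by ring_nf
  rw [h0, zero_add, laguerreL]
  apply Finset.sum_pos
  · intro k _
    have hterm : (-1:ℝ)^k / (Nat.factorial k : ℝ) *
        ((∏ j ∈ Finset.Icc (k+1) m, (α + (j:ℝ))) / (Nat.factorial (m-k) : ℝ)) * (-(α+1))^k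
        = (α+1)^k * ((∏ j ∈ Finset.Icc (k+1) m, (α + (j:ℝ)))
            / ((Nat.factorial k : ℝ) * (Nat.factorial (m-k) : ℝ))) := by
      have hpow : (-1:ℝ)^k * (-(α+1))^k = (α+1)^k := by
        rw [← mul_pow]; ring_nf
      field_simp
      linear_combination hpow
    rw [hterm]
    have hP : 0 < ∏ j ∈ Finset.Icc (k+1) m, (α + (j:ℝ)) := by
      apply Finset.prod_pos
      intro j _
      have : (0:ℝ) ≤ (j:ℝ) := Nat.cast_nonneg j
      linarith
    positivity
  · exact ⟨0, Finset.mem_range.2 (by omega)⟩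

lemma X1_limit (t : ℝ) (m : ℕ) :
    Tendsto (fun α : ℝ =>
        X1laguerreL α (m+2) (α + Real.sqrt (2*α) * t) / (Real.sqrt (2*α))^(m+3))
      atTop (nhds (- cherm (m+1) t)) := by
  set s : ℝ → ℝ := fun α => Real.sqrt (2*α) with hsdef
  have hmain : Tendsto (fun α : ℝ =>
      -(1 + t*(1/s α) + (1/s α)^2) * (laguerreL α (m+1) (α + s α * t) / (s α)^(m+1))
        + (1/s α)^3 * (laguerreL α m (α + s α * t) / (s α)^m))
      atTop (nhds (-(1 + t*0 + 0^2) * cherm (m+1) t + 0^3 * cherm m t)) := by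
    exact ((((tendsto_const_nhds.add (inv_sqrt2a_tendsto.const_mul t)).add
      (inv_sqrt2a_tendsto.pow 2)).neg).mul (lag_limit t (m+1))).add
      ((inv_sqrt2a_tendsto.pow 3).mul (lag_limit t m))
  have hval : (-(1 + t*0 + (0:ℝ)^2) * cherm (m+1) t + 0^3 * cherm m t) = - cherm (m+1) t := by
    ring
  rw [hval] at hmain
  apply Tendsto.congr' _ hmain
  filter_upwards [eventually_gt_atTop (0:ℝ)] with α hα
  have hs : 0 < s α := Real.sqrt_pos.2 (by linarith)
  have hs2 : s α ^ 2 = 2*α := Real.sq_sqrt (by linarith)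
  have hsne : s α ≠ 0 := ne_of_gt hs
  rw [X1_eq]
  have hx : -((α + s α * t) + α + 1) = -((s α)^2 + s α * t + 1) := by
    rw [hs2]; ring
  rw [hx]
  have alg : ∀ A B : ℝ,
      (-(1 + t*(1/s α) + (1/s α)^2) * (A / (s α)^(m+1)) + (1/s α)^3 * (B/(s α)^m))
      = (-((s α)^2 + s α * t + 1) * A + B) / (s α)^(m+3) := by
    intro A B
    rw [show m+3 = (m+1)+2 from rfl, pow_succ, pow_succ, pow_succ]
    field_simp
    ring
  exact alg _ _

lemma X1_ev_pos {t : ℝ} {m : ℕ} (hH : 0 < - cherm (m+1) t) :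
    ∀ᶠ α in atTop, 0 < X1laguerreL α (m+2) (α + Real.sqrt (2*α) * t) := by
  filter_upwards [(X1_limit t m).eventually (eventually_gt_nhds hH),
    eventually_gt_atTop (0:ℝ)] with α h1 h2
  have hs : 0 < Real.sqrt (2*α) := Real.sqrt_pos.2 (by linarith)
  have hp : (0:ℝ) < (Real.sqrt (2*α))^(m+3) := pow_pos hs _
  have := mul_pos h1 hp
  rwa [div_mul_cancel₀ _ (ne_of_gt hp)] at this

lemma X1_ev_neg {t : ℝ} {m : ℕ} (hH : - cherm (m+1) t < 0) :
    ∀ᶠ α in atTop, X1laguerreL α (m+2) (α + Real.sqrt (2*α) * t) < 0 := by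
  filter_upwards [(X1_limit t m).eventually (eventually_lt_nhds hH),
    eventually_gt_atTop (0:ℝ)] with α h1 h2
  have hs : 0 < Real.sqrt (2*α) := Real.sqrt_pos.2 (by linarith)
  have hp : (0:ℝ) < (Real.sqrt (2*α))^(m+3) := pow_pos hs _
  have := mul_neg_of_neg_of_pos h1 hp
  rwa [div_mul_cancel₀ _ (ne_of_gt hp)] at this

lemma ev_shift_pos (c : ℝ) : ∀ᶠ α in atTop, 0 < α + Real.sqrt (2*α) * c := by
  filter_upwards [eventually_ge_atTop (max 1 (8*c^2))] with α hα
  have hα1 : (1:ℝ) ≤ α := le_trans (le_max_left _ _) hα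
  have hα8 : 8*c^2 ≤ α := le_trans (le_max_right _ _) hα
  have h1 : Real.sqrt (2*α) * |c| ≤ α/2 := by
    have e1 : Real.sqrt (2*α) * |c| = Real.sqrt (2*α*c^2) := by
      rw [show 2*α*c^2 = (2*α)*(c^2) from by ring,
        Real.sqrt_mul (show (0:ℝ) ≤ 2*α by linarith) (c^2), Real.sqrt_sq_eq_abs]
    rw [e1]
    calc Real.sqrt (2*α*c^2) ≤ Real.sqrt ((α/2)^2) := by
          apply Real.sqrt_le_sqrt; nlinarith
      _ = α/2 := by rw [Real.sqrt_sq (by linarith)]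
  have h2 : -(α/2) ≤ Real.sqrt (2*α) * c := by
    have := Real.sqrt_nonneg (2*α)
    nlinarith [neg_abs_le c, abs_nonneg c]
  linarith

/-- main -/
theorem X1laguerre_zeros_tendsto_hermite_zeros
    (n k : ℕ) (hk : 2 ≤ k) (hkn : k ≤ n)
    (z : ℝ → ℕ → ℝ) (h : ℕ → ℝ)
    (hz : ∀ α : ℝ, 0 < α → EnumZeros (X1laguerreL α n) n (z α))
    (hh : EnumZeros (hermiteH (n - 1)) (n - 1) h) :
    Filter.Tendsto (fun α : ℝ => (z α k - α) / Real.sqrt (2 * α)) Filter.atTop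
      (nhds (h (k - 1))) := by
  obtain ⟨m, rfl⟩ : ∃ m, n = m + 2 := ⟨n - 2, by omega⟩
  have hh' : EnumZeros (hermiteH (m+1)) (m+1) h := hh
  have hhmono := hh'.1
  have hmono : ∀ a b : ℕ, 1 ≤ a → a ≤ b → b ≤ m+1 → h a ≤ h b := fun a b ha hab hb =>
    hhmono.monotoneOn (Set.mem_Icc.2 ⟨ha, by omega⟩) (Set.mem_Icc.2 ⟨by omega, hb⟩) hab
  have hstrict : ∀ a b : ℕ, 1 ≤ a → a < b → b ≤ m+1 → h a < h b := fun a b ha hab hb =>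
    hhmono (Set.mem_Icc.2 ⟨ha, by omega⟩) (Set.mem_Icc.2 ⟨by omega, hb⟩) hab
  rw [Metric.tendsto_nhds]
  intro ε hε
  obtain ⟨δ, hδpos, hδε, hδ1, hδ2⟩ : ∃ δ : ℝ, 0 < δ ∧ δ < ε ∧
      (3 ≤ k → δ < h (k-1) - h (k-2)) ∧ (k ≤ m+1 → δ < h k - h (k-1)) := by
    set d1 : ℝ := if 3 ≤ k then h (k-1) - h (k-2) else 1 with hd1
    set d2 : ℝ := if k ≤ m+1 then h k - h (k-1) else 1 with hd2
    have hd1pos : 0 < d1 := by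
      rw [hd1]; split_ifs with h3
      · have := hstrict (k-2) (k-1) (by omega) (by omega) (by omega); linarith
      · norm_num
    have hd2pos : 0 < d2 := by
      rw [hd2]; split_ifs with h3
      · have := hstrict (k-1) k (by omega) (by omega) (by omega); linarith
      · norm_num
    have hmin : 0 < min ε (min d1 d2) := lt_min hε (lt_min hd1pos hd2pos)
    refine ⟨min ε (min d1 d2) / 2, by linarith, ?_, ?_, ?_⟩
    · have := min_le_left ε (min d1 d2); linarith
    · intro h3
      have h1 : min ε (min d1 d2) ≤ d1 := le_trans (min_le_right _ _) (min_le_left _ _)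
      have h2 : d1 = h (k-1) - h (k-2) := by rw [hd1, if_pos h3]
      linarith
    · intro h3
      have h1 : min ε (min d1 d2) ≤ d2 := le_trans (min_le_right _ _) (min_le_right _ _)
      have h2 : d2 = h k - h (k-1) := by rw [hd2, if_pos h3]
      linarith
  set T : ℕ → ℝ := fun j => if j = k-2 then h (k-1) - δ else if j = k-1 then h (k-1) + δ
    else if j = 0 then h 1 - 1 else if j = m+1 then h (m+1) + 1 else (h j + h (j+1))/2 with hT
  have L1 : ∀ j, 1 ≤ j → j ≤ m+1 → h j < T j := by
    intro j hj1 hjm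
    by_cases e1 : j = k-2
    · have hk3 : 3 ≤ k := by omega
      have hgap := hδ1 hk3
      have hje : h j = h (k-2) := by rw [e1]
      simp only [hT, if_pos e1]
      rw [hje]
      linarith
    · by_cases e2 : j = k-1
      · have hje : h j = h (k-1) := by rw [e2]
        simp only [hT, if_neg e1, if_pos e2]
        rw [hje]
        linarith
      · by_cases e4 : j = m+1
        · have hje : h j = h (m+1) := by rw [e4]
          simp only [hT, if_neg e1, if_neg e2, if_neg (by omega : ¬ j = 0), if_pos e4]
          rw [hje]; linarith
        · simp only [hT, if_neg e1, if_neg e2, if_neg (by omega : ¬ j = 0), if_neg e4]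
          have := hstrict j (j+1) hj1 (by omega) (by omega)
          linarith
  have L2 : ∀ j, j ≤ m → T j < h (j+1) := by
    intro j hjm
    by_cases e1 : j = k-2
    · simp only [hT, if_pos e1]
      rw [show j+1 = k-1 by omega]
      linarith
    · by_cases e2 : j = k-1
      · simp only [hT, if_neg e1, if_pos e2]
        rw [show j+1 = k by omega]
        have := hδ2 (by omega)
        linarith
      · by_cases e3 : j = 0
        · simp only [hT, if_neg e1, if_neg e2, if_pos e3]
          rw [show j+1 = 1 by omega]
          norm_num
        · simp only [hT, if_neg e1, if_neg e2, if_neg e3, if_neg (by omega : ¬ j = m+1)]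
          have := hstrict j (j+1) (by omega) (by omega) (by omega)
          linarith
  have P1 : ∀ j i, j ≤ m+1 → 1 ≤ i → i ≤ j → h i < T j := fun j i hj hi1 hij =>
    lt_of_le_of_lt (hmono i j hi1 hij hj) (L1 j (by omega) hj)
  have P2 : ∀ j i, j < i → i ≤ m+1 → T j < h i := fun j i hji hi =>
    lt_of_lt_of_le (L2 j (by omega)) (hmono (j+1) i (by omega) (by omega) hi)
  have Tmono : ∀ a b, a < b → b ≤ m+1 → T a < T b := fun a b hab hb =>
    lt_trans (L2 a (by omega)) (P1 b (a+1) hb (by omega) (by omega))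
  have hsign : ∀ j, j ≤ m+1 → 0 < (-1:ℝ)^(m+1-j) * hermiteH (m+1) (T j) := by
    intro j hj
    rw [herm_factor (by omega) hh' (T j)]
    rw [show Finset.Icc 1 (m+1) = Finset.Ioc 0 (m+1) from Finset.Icc_add_one_left_eq_Ioc 0 (m+1)]
    rw [← Finset.prod_Ioc_consecutive _ (Nat.zero_le j) hj]
    have hpos1 : 0 < ∏ i ∈ Finset.Ioc 0 j, (T j - h i) := by
      apply Finset.prod_pos
      intro i hi
      rw [Finset.mem_Ioc] at hi
      have := P1 j i hj hi.1 hi.2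
      linarith
    have hpos2 : 0 < ∏ i ∈ Finset.Ioc j (m+1), (h i - T j) := by
      apply Finset.prod_pos
      intro i hi
      rw [Finset.mem_Ioc] at hi
      have := P2 j i hi.1 hi.2
      linarith
    have hneg : ∏ i ∈ Finset.Ioc j (m+1), (T j - h i)
        = (-1:ℝ)^(m+1-j) * ∏ i ∈ Finset.Ioc j (m+1), (h i - T j) := by
      rw [show (∏ i ∈ Finset.Ioc j (m+1), (T j - h i))
          = ∏ i ∈ Finset.Ioc j (m+1), ((-1) * (h i - T j)) from
        Finset.prod_congr rfl (fun i _ => by ring)]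
      rw [Finset.prod_mul_distrib, Finset.prod_const, Nat.card_Ioc]
    rw [hneg]
    have hsq : (-1:ℝ)^(m+1-j) * ((-1:ℝ)^(m+1-j)) = 1 := by
      rw [← mul_pow]; norm_num
    have e : (-1:ℝ)^(m+1-j) * ((2:ℝ)^(m+1) *
        ((∏ i ∈ Finset.Ioc 0 j, (T j - h i)) *
          ((-1:ℝ)^(m+1-j) * ∏ i ∈ Finset.Ioc j (m+1), (h i - T j))))
        = (2:ℝ)^(m+1) * ((∏ i ∈ Finset.Ioc 0 j, (T j - h i)) *
            (∏ i ∈ Finset.Ioc j (m+1), (h i - T j))) := by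
      rw [show (-1:ℝ)^(m+1-j) * ((2:ℝ)^(m+1) *
        ((∏ i ∈ Finset.Ioc 0 j, (T j - h i)) *
          ((-1:ℝ)^(m+1-j) * ∏ i ∈ Finset.Ioc j (m+1), (h i - T j))))
        = ((-1:ℝ)^(m+1-j) * ((-1:ℝ)^(m+1-j))) * ((2:ℝ)^(m+1) *
            ((∏ i ∈ Finset.Ioc 0 j, (T j - h i)) *
              (∏ i ∈ Finset.Ioc j (m+1), (h i - T j)))) from by ring, hsq, one_mul]
    rw [e]
    positivity
  have hsgnev : ∀ j ∈ Finset.range (m+2), ∀ᶠ α in atTop,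
      (if Odd j then 0 < X1laguerreL α (m+2) (α + Real.sqrt (2*α) * T j)
       else X1laguerreL α (m+2) (α + Real.sqrt (2*α) * T j) < 0) := by
    intro j hj
    rw [Finset.mem_range] at hj
    have hkey : (-1:ℝ)^(m+1-j) * (-1:ℝ)^j = (-1:ℝ)^(m+1) := by
      rw [← pow_add, Nat.sub_add_cancel (by omega)]
    have hsj := hsign j (by omega)
    have hc : - cherm (m+1) (T j)
        = ((-1:ℝ)^m * hermiteH (m+1) (T j)) / (2^(m+1) * ((Nat.factorial (m+1)) : ℝ)) := by
      rw [cherm, pow_succ]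
      ring
    rcases Nat.even_or_odd j with hje | hjo
    · simp only [if_neg (Nat.not_odd_iff_even.2 hje)]
      apply X1_ev_neg
      rw [hc]
      apply div_neg_of_neg_of_pos _ (by positivity)
      have hj1 : (-1:ℝ)^j = 1 := Even.neg_one_pow hje
      rw [hj1, mul_one] at hkey
      rw [hkey, pow_succ] at hsj
      nlinarith [hsj]
    · simp only [if_pos hjo]
      apply X1_ev_pos
      rw [hc]
      apply div_pos _ (by positivity)
      have hj1 : (-1:ℝ)^j = -1 := Odd.neg_one_pow hjo
      rw [hj1] at hkey
      have : (-1:ℝ)^(m+1-j) = (-1:ℝ)^m := by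
        rw [pow_succ] at hkey
        linear_combination -hkey
      rw [this] at hsj
      exact hsj
  have hallsgn : ∀ᶠ α in atTop, ∀ j ∈ Finset.range (m+2),
      (if Odd j then 0 < X1laguerreL α (m+2) (α + Real.sqrt (2*α) * T j)
       else X1laguerreL α (m+2) (α + Real.sqrt (2*α) * T j) < 0) :=
    (eventually_all_finset _).2 hsgnev
  filter_upwards [hallsgn, eventually_ge_atTop (1:ℝ), ev_shift_pos (T 0)] with α hsgn hα1 hS0
  have hα : 0 < α := by linarith
  have hs : 0 < Real.sqrt (2*α) := Real.sqrt_pos.2 (by linarith)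
  obtain ⟨hzmono, hziff⟩ := hz α hα
  have Smono : ∀ a b, a < b → b ≤ m+1 →
      α + Real.sqrt (2*α) * T a < α + Real.sqrt (2*α) * T b := by
    intro a b hab hb
    have := Tmono a b hab hb
    nlinarith [hs]
  set u : ℕ → ℝ := fun i => if i ≤ 1 then -(α+1) else α + Real.sqrt (2*α) * T (i-2) with hu
  set v : ℕ → ℝ := fun i => if i ≤ 1 then 0 else α + Real.sqrt (2*α) * T (i-1) with hv
  have hex : ∀ i, 1 ≤ i → i ≤ m+2 →
      ∃ y, y ∈ Set.Ioo (u i) (v i) ∧ X1laguerreL α (m+2) y = 0 := by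
    intro i hi1 hi2
    rcases eq_or_lt_of_le hi1 with h1 | h1
    · obtain rfl : i = 1 := h1.symm
      simp only [hu, hv, if_pos (le_refl 1)]
      have ha := X1_at_neg_pos m hα
      have hb := X1_at_zero_neg m hα1
      have hsub := intermediate_value_Ioo' (show -(α+1) ≤ (0:ℝ) by linarith)
        ((X1_cont α m).continuousOn)
      obtain ⟨y, hy, hy0⟩ := hsub (Set.mem_Ioo.2 ⟨hb, ha⟩)
      exact ⟨y, hy, hy0⟩
    · have hi2' : 2 ≤ i := h1
      simp only [hu, hv, if_neg (by omega : ¬ i ≤ 1)]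
      have hlt : α + Real.sqrt (2*α) * T (i-2) < α + Real.sqrt (2*α) * T (i-1) :=
        Smono (i-2) (i-1) (by omega) (by omega)
      have hsA := hsgn (i-2) (Finset.mem_range.2 (by omega))
      have hsB := hsgn (i-1) (Finset.mem_range.2 (by omega))
      rcases Nat.even_or_odd i with hie | hio
      · have hA : ¬ Odd (i-2) := by
          rw [Nat.odd_sub (by omega)]
          simp [Nat.not_odd_iff_even.2 hie, Nat.not_odd_iff_even.2 (by norm_num : Even 2)]
        have hB : Odd (i-1) := by
          rw [Nat.odd_sub (by omega)]
          simp [Nat.not_odd_iff_even.2 hie]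
        rw [if_neg hA] at hsA
        rw [if_pos hB] at hsB
        obtain ⟨y, hy, hy0⟩ := intermediate_value_Ioo (le_of_lt hlt)
          ((X1_cont α m).continuousOn) (Set.mem_Ioo.2 ⟨hsA, hsB⟩)
        exact ⟨y, hy, hy0⟩
      · have hA : Odd (i-2) := by
          rw [Nat.odd_sub (by omega)]
          simp [hio, Nat.not_odd_iff_even.2 (by norm_num : Even 2)]
        have hB : ¬ Odd (i-1) := by
          rw [Nat.odd_sub (by omega)]
          simp [hio]
        rw [if_pos hA] at hsA
        rw [if_neg hB] at hsB
        obtain ⟨y, hy, hy0⟩ := intermediate_value_Ioo' (le_of_lt hlt)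
          ((X1_cont α m).continuousOn) (Set.mem_Ioo.2 ⟨hsB, hsA⟩)
        exact ⟨y, hy, hy0⟩
  choose! w hw1 hw2 using hex
  have hvu : ∀ i i', 1 ≤ i → i < i' → i' ≤ m+2 → v i ≤ u i' := by
    intro i i' hi hii hi'
    by_cases hi1 : i ≤ 1
    · simp only [hv, hu, if_pos hi1, if_neg (by omega : ¬ i' ≤ 1)]
      have hpos : 0 < α + Real.sqrt (2*α) * T (i'-2) := by
        rcases Nat.eq_zero_or_pos (i'-2) with he | hp
        · rw [he]; exact hS0
        · exact lt_trans hS0 (Smono 0 _ hp (by omega))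
      linarith
    · simp only [hv, hu, if_neg hi1, if_neg (by omega : ¬ i' ≤ 1)]
      rcases Nat.lt_or_ge (i-1) (i'-2) with hlt | hge
      · exact le_of_lt (Smono _ _ hlt (by omega))
      · have : i-1 = i'-2 := by omega
        rw [this]
  have hwmono : StrictMonoOn w (Set.Icc 1 (m+2)) := by
    intro a ha b hb hab
    rw [Set.mem_Icc] at ha hb
    have h1 := (hw1 a ha.1 ha.2).2
    have h2 := (hw1 b hb.1 hb.2).1
    have := hvu a b ha.1 hab hb.2
    linarith
  have hwzero : ∀ i, 1 ≤ i → i ≤ m+2 → ∃ j, 1 ≤ j ∧ j ≤ m+2 ∧ w i = z α j := fun i hi1 hi2 =>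
    (hziff (w i)).1 (hw2 i hi1 hi2)
  have hzw : ∀ i, 1 ≤ i → i ≤ m+2 → ∃ j, 1 ≤ j ∧ j ≤ m+2 ∧ z α i = w j := by
    intro i hi1 hi2
    have hBA : (Finset.Icc 1 (m+2)).image w ⊆ (Finset.Icc 1 (m+2)).image (z α) := by
      intro y hy
      rw [Finset.mem_image] at hy ⊢
      obtain ⟨a, ha, rfl⟩ := hy
      rw [Finset.mem_Icc] at ha
      obtain ⟨j, hj1, hj2, hje⟩ := hwzero a ha.1 ha.2
      exact ⟨j, Finset.mem_Icc.2 ⟨hj1, hj2⟩, hje.symm⟩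
    have hcA : ((Finset.Icc 1 (m+2)).image (z α)).card = m+2 := by
      rw [Finset.card_image_of_injOn, Nat.card_Icc]
      · omega
      · rw [Finset.coe_Icc]; exact hzmono.injOn
    have hcB : ((Finset.Icc 1 (m+2)).image w).card = m+2 := by
      rw [Finset.card_image_of_injOn, Nat.card_Icc]
      · omega
      · rw [Finset.coe_Icc]; exact hwmono.injOn
    have hAB : (Finset.Icc 1 (m+2)).image (z α) = (Finset.Icc 1 (m+2)).image w :=
      (Finset.eq_of_subset_of_card_le hBA (by omega)).symm
    have hmem : z α i ∈ (Finset.Icc 1 (m+2)).image w := by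
      rw [← hAB]
      exact Finset.mem_image_of_mem _ (Finset.mem_Icc.2 ⟨hi1, hi2⟩)
    rw [Finset.mem_image] at hmem
    obtain ⟨j, hj, hje⟩ := hmem
    rw [Finset.mem_Icc] at hj
    exact ⟨j, hj.1, hj.2, hje.symm⟩
  have heq := enum_unique hzmono hwmono hzw hwzero k (by omega) hkn
  have hwk := hw1 k (by omega) hkn
  simp only [hu, hv, if_neg (by omega : ¬ k ≤ 1)] at hwk
  obtain ⟨hlo, hhi⟩ := hwk
  have hTk2 : T (k-2) = h (k-1) - δ := by
    simp [hT]
  have hTk1 : T (k-1) = h (k-1) + δ := by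
    simp [hT, show ¬ k-1 = k-2 by omega]
  rw [heq, Real.dist_eq, abs_lt]
  rw [hTk2] at hlo
  rw [hTk1] at hhi
  have e1 : h (k-1) - δ < (w k - α)/Real.sqrt (2*α) := by
    rw [lt_div_iff₀ hs]
    nlinarith [hlo]
  have e2 : (w k - α)/Real.sqrt (2*α) < h (k-1) + δ := by
    rw [div_lt_iff₀ hs]
    nlinarith [hhi]
  constructor
  · linarith
  · linarith
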